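/- (Associated dominant solution.) Let λ ∈ ℝ and let Z̃ = (X̃; Ũ) be a conjoined basis of (S_λ) such that X̃ₖ is invertible for every k ∈ ℕ. Put Λₖ := Σ_{j=0}^{k−1} ( −X̃_j^{−1} ℬ_j (X̃_{j+1}*)^{−1} ) (so Λ₀ = 0), X̂ₖ := X̃ₖ Λₖ and Ûₖ := Ũₖ Λₖ + (X̃ₖ*)^{−1}. Then: (i) each matrix X̃ₖ^{−1} ℬₖ (X̃_{k+1}*)^{−1} is Hermitian, hence Λₖ is Hermitian for every k; (ii) Ẑ = (X̂; Û) is a solution of (S_λ), i.e., Ẑₖ = (𝒮ₖ + λ𝒱ₖ) Ẑ_{k+1} for all k; (iii) Z̃ₖ* 𝒥 Ẑₖ = Iₙ for all k (so Z̃ and Ẑ are normalized conjoined bases); and (iv) whenever Λₖ is invertible, X̂ₖ is invertible and X̂ₖ^{−1} X̃ₖ = Λₖ^{−1} is Hermitian. -/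

import Mathlib

open Matrix Filter
open scoped ComplexOrder

noncomputable def Jmat (n : ℕ) : Matrix (Fin n ⊕ Fin n) (Fin n ⊕ Fin n) ℂ :=
  Matrix.fromBlocks 0 1 (-1) 0

noncomputable def PsiMat {n : ℕ} (W : ℕ → Matrix (Fin n) (Fin n) ℂ) (k : ℕ) :
    Matrix (Fin n ⊕ Fin n) (Fin n ⊕ Fin n) ℂ :=
  Matrix.fromBlocks (W k) 0 0 0

noncomputable def Vmat {n : ℕ} (S : ℕ → Matrix (Fin n ⊕ Fin n) (Fin n ⊕ Fin n) ℂ)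
    (W : ℕ → Matrix (Fin n) (Fin n) ℂ) (k : ℕ) :
    Matrix (Fin n ⊕ Fin n) (Fin n ⊕ Fin n) ℂ :=
  -(Jmat n * PsiMat W k * S k)

/-- `Z` is a conjoined basis of system `(S_ν)`: a `2n×n` matrix solution with
`rank Zₖ = n` and `Zₖ* 𝒥 Zₖ = 0` for all `k`. -/
def IsConjoinedBasis {n : ℕ} (S : ℕ → Matrix (Fin n ⊕ Fin n) (Fin n ⊕ Fin n) ℂ)
    (W : ℕ → Matrix (Fin n) (Fin n) ℂ) (nu : ℝ)
    (Z : ℕ → Matrix (Fin n ⊕ Fin n) (Fin n) ℂ) : Prop :=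
  (∀ k, Z k = (S k + (nu : ℂ) • Vmat S W k) * Z (k + 1)) ∧
    ∀ k, (Z k).rank = n ∧ (Z k)ᴴ * Jmat n * Z k = 0

/-- `Z̃ = (X̃; Ũ)` is a recessive solution of `(S_ν)`: a conjoined basis such that for all
sufficiently large `k` the matrix `X̃ₖ` is invertible with `−X̃ₖ⁻¹ ℬₖ (X̃_{k+1}*)⁻¹ ≥ 0`,
and for every conjoined basis `Z = (X; U)` normalized with `Z̃` (i.e. `Zₖ* 𝒥 Z̃ₖ = I`),
the matrix `Xₖ` is invertible for all large `k` and `Xₖ⁻¹ X̃ₖ → 0` as `k → ∞`. -/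
def IsRecessive {n : ℕ} (S : ℕ → Matrix (Fin n ⊕ Fin n) (Fin n ⊕ Fin n) ℂ)
    (W B : ℕ → Matrix (Fin n) (Fin n) ℂ) (nu : ℝ)
    (Xt Ut : ℕ → Matrix (Fin n) (Fin n) ℂ) : Prop :=
  IsConjoinedBasis S W nu (fun k => Matrix.fromRows (Xt k) (Ut k)) ∧
    (∃ k₀ : ℕ, ∀ k, k₀ ≤ k →
      IsUnit (Xt k) ∧ (-((Xt k)⁻¹ * B k * ((Xt (k + 1))ᴴ)⁻¹)).PosSemidef) ∧
    ∀ X U : ℕ → Matrix (Fin n) (Fin n) ℂ,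
      IsConjoinedBasis S W nu (fun k => Matrix.fromRows (X k) (U k)) →
      (∀ k, (Matrix.fromRows (X k) (U k))ᴴ * Jmat n * Matrix.fromRows (Xt k) (Ut k) = 1) →
      (∃ k₁ : ℕ, ∀ k, k₁ ≤ k → IsUnit (X k)) ∧
        Filter.Tendsto (fun k => (X k)⁻¹ * Xt k) Filter.atTop (nhds 0)

/-- The system is eventually controllable: there is `N` such that on any finite subinterval
`{K,…,M}` of `[N,∞)` the only `u` with `0 = ℬₖ u_{k+1}` and `uₖ = 𝒟ₖ u_{k+1}` for all
`k ∈ {K,…,M−1}` is the trivial one. -/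
def EventuallyControllable {n : ℕ} (B D : ℕ → Matrix (Fin n) (Fin n) ℂ) : Prop :=
  ∃ N : ℕ, ∀ K M : ℕ, N ≤ K → K < M →
    ∀ u : ℕ → Fin n → ℂ,
      (∀ k, K ≤ k → k < M → B k *ᵥ u (k + 1) = 0 ∧ u k = D k *ᵥ u (k + 1)) →
      ∀ k, K ≤ k → k ≤ M → u k = 0

/-- The strong Atkinson (definiteness) condition: there are `λ₀ ∈ ℂ` and `a ≤ b` in `ℕ`
such that every solution `z` of `(S_{λ₀})` with `Σ_{k=a}^{b} zₖ*Ψₖzₖ = 0` vanishes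
identically. -/
def StrongAtkinson {n : ℕ} (S : ℕ → Matrix (Fin n ⊕ Fin n) (Fin n ⊕ Fin n) ℂ)
    (W : ℕ → Matrix (Fin n) (Fin n) ℂ) : Prop :=
  ∃ (lam0 : ℂ) (a b : ℕ), a ≤ b ∧
    ∀ z : ℕ → (Fin n ⊕ Fin n) → ℂ,
      (∀ k, z k = (S k + lam0 • Vmat S W k) *ᵥ z (k + 1)) →
      (∑ k ∈ Finset.Icc a b, star (z k) ⬝ᵥ (PsiMat W k *ᵥ z k)) = 0 →
      ∀ k, z k = 0

/-- `Λₖ = Σ_{j=0}^{k−1} (−X̃_j⁻¹ ℬ_j (X̃_{j+1}*)⁻¹)` (so `Λ₀ = 0`). -/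
noncomputable def LamMat {n : ℕ} (B Xt : ℕ → Matrix (Fin n) (Fin n) ℂ) (k : ℕ) :
    Matrix (Fin n) (Fin n) ℂ :=
  ∑ j ∈ Finset.range k, -((Xt j)⁻¹ * B j * ((Xt (j + 1))ᴴ)⁻¹)

/-- `X̂ₖ = X̃ₖ Λₖ`. -/
noncomputable def Xhat {n : ℕ} (B Xt : ℕ → Matrix (Fin n) (Fin n) ℂ) (k : ℕ) :
    Matrix (Fin n) (Fin n) ℂ :=
  Xt k * LamMat B Xt k

/-- `Ûₖ = Ũₖ Λₖ + (X̃ₖ*)⁻¹`. -/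
noncomputable def Uhat {n : ℕ} (B Xt Ut : ℕ → Matrix (Fin n) (Fin n) ℂ) (k : ℕ) :
    Matrix (Fin n) (Fin n) ℂ :=
  Ut k * LamMat B Xt k + ((Xt k)ᴴ)⁻¹

/-- Associated dominant solution: for a conjoined basis `Z̃ = (X̃; Ũ)` of
`(S_λ)` with all `X̃ₖ` invertible, setting `Λₖ, X̂ₖ, Ûₖ` as above: (i) each
`X̃ₖ⁻¹ ℬₖ (X̃_{k+1}*)⁻¹` is Hermitian, hence each `Λₖ` is Hermitian; (ii) `Ẑ = (X̂; Û)`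
solves `(S_λ)`; (iii) `Z̃ₖ* 𝒥 Ẑₖ = Iₙ` for all `k`; (iv) whenever `Λₖ` is invertible, `X̂ₖ`
is invertible and `X̂ₖ⁻¹ X̃ₖ = Λₖ⁻¹` is Hermitian. -/
-- Auxiliary lemmas ------------------------------------------------------

lemma Jmat_sq (n : ℕ) : Jmat n * Jmat n = -1 := by
  rw [Jmat, Matrix.fromBlocks_multiply]
  simp only [Matrix.zero_mul, Matrix.mul_zero, Matrix.one_mul, Matrix.mul_one,
    Matrix.neg_mul, Matrix.mul_neg, zero_add, add_zero, neg_zero, Matrix.mul_zero]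
  rw [show (-1 : Matrix (Fin n ⊕ Fin n) (Fin n ⊕ Fin n) ℂ) =
      -(Matrix.fromBlocks 1 0 0 1) by rw [Matrix.fromBlocks_one],
    Matrix.fromBlocks_neg]
  simp

lemma symp_flip {n : ℕ} {M : Matrix (Fin n ⊕ Fin n) (Fin n ⊕ Fin n) ℂ}
    (h : Mᴴ * Jmat n * M = Jmat n) : M * Jmat n * Mᴴ = Jmat n := by
  have h1 : (-(Jmat n) * Mᴴ * Jmat n) * M = 1 := by
    calc (-(Jmat n) * Mᴴ * Jmat n) * M
        = -(Jmat n) * (Mᴴ * Jmat n * M) := by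
          simp only [Matrix.mul_assoc, Matrix.neg_mul]
      _ = 1 := by rw [h, Matrix.neg_mul, Jmat_sq, neg_neg]
  have h2 : M * (-(Jmat n) * Mᴴ * Jmat n) = 1 := mul_eq_one_comm.mpr h1
  have h3 := congrArg (fun N => N * (-(Jmat n))) h2
  simp only [Matrix.mul_assoc, one_mul] at h3
  -- h3 : M * (-Jmat n * (Mᴴ * (Jmat n * -Jmat n))) = 1 * -Jmat n
  rw [Matrix.mul_neg, Jmat_sq, neg_neg, Matrix.mul_one] at h3
  -- h3 : M * (-Jmat n * Mᴴ) = -Jmat n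
  have h4 := congrArg (fun N => -N) h3
  simp only [Matrix.neg_mul, Matrix.mul_neg, neg_neg] at h4
  calc M * Jmat n * Mᴴ = M * (Jmat n * Mᴴ) := by rw [Matrix.mul_assoc]
    _ = Jmat n := h4


theorem statement17 {n : ℕ} (hn : 1 ≤ n)
    (S : ℕ → Matrix (Fin n ⊕ Fin n) (Fin n ⊕ Fin n) ℂ)
    (A B C D W : ℕ → Matrix (Fin n) (Fin n) ℂ)
    (hS : ∀ k, (S k)ᴴ * Jmat n * S k = Jmat n)
    (hblocks : ∀ k, S k = Matrix.fromBlocks (A k) (B k) (C k) (D k))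
    (hW : ∀ k, (W k).PosDef)
    (lam : ℝ) (Xt Ut : ℕ → Matrix (Fin n) (Fin n) ℂ)
    (hcb : IsConjoinedBasis S W lam (fun k => Matrix.fromRows (Xt k) (Ut k)))
    (hXinv : ∀ k, IsUnit (Xt k)) :
    (∀ k, ((Xt k)⁻¹ * B k * ((Xt (k + 1))ᴴ)⁻¹).IsHermitian) ∧
      (∀ k, (LamMat B Xt k).IsHermitian) ∧
      (∀ k, Matrix.fromRows (Xhat B Xt k) (Uhat B Xt Ut k) =
        (S k + (lam : ℂ) • Vmat S W k) *
          Matrix.fromRows (Xhat B Xt (k + 1)) (Uhat B Xt Ut (k + 1))) ∧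
      (∀ k, (Matrix.fromRows (Xt k) (Ut k))ᴴ * Jmat n *
          Matrix.fromRows (Xhat B Xt k) (Uhat B Xt Ut k) = 1) ∧
      (∀ k, IsUnit (LamMat B Xt k) →
        IsUnit (Xhat B Xt k) ∧ (Xhat B Xt k)⁻¹ * Xt k = (LamMat B Xt k)⁻¹ ∧
          ((LamMat B Xt k)⁻¹).IsHermitian) := by
  obtain ⟨hsol, hrk⟩ := hcb
  set l : ℂ := (lam : ℂ) with hl
  have hlstar : star l = l := by rw [hl]; exact Complex.conj_ofReal lam
  -- unit facts
  have hd : ∀ k, IsUnit (Xt k).det := fun k => (Matrix.isUnit_iff_isUnit_det _).mp (hXinv k)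
  have hdH : ∀ k, IsUnit ((Xt k)ᴴ).det := by
    intro k; rw [Matrix.det_conjTranspose]; exact (hd k).star
  have hinv1 : ∀ k, (Xt k)⁻¹ * Xt k = 1 := fun k => Matrix.nonsing_inv_mul _ (hd k)
  have hinv2 : ∀ k, Xt k * (Xt k)⁻¹ = 1 := fun k => Matrix.mul_nonsing_inv _ (hd k)
  have hinv3 : ∀ k, ((Xt k)ᴴ)⁻¹ * (Xt k)ᴴ = 1 := fun k => Matrix.nonsing_inv_mul _ (hdH k)
  have hinv4 : ∀ k, (Xt k)ᴴ * ((Xt k)ᴴ)⁻¹ = 1 := fun k => Matrix.mul_nonsing_inv _ (hdH k)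
  have hWH : ∀ k, (W k)ᴴ = W k := fun k => (hW k).1
  -- block form of the system matrix
  set C' : ℕ → Matrix (Fin n) (Fin n) ℂ := fun k => C k + l • (W k * A k) with hC'
  set D' : ℕ → Matrix (Fin n) (Fin n) ℂ := fun k => D k + l • (W k * B k) with hD'
  have hM : ∀ k, S k + l • Vmat S W k = Matrix.fromBlocks (A k) (B k) (C' k) (D' k) := by
    intro k
    rw [Vmat, PsiMat, Jmat, hblocks k, Matrix.fromBlocks_multiply, Matrix.fromBlocks_multiply]
    simp only [Matrix.zero_mul, Matrix.mul_zero, Matrix.one_mul, Matrix.mul_one,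
      Matrix.neg_mul, zero_add, add_zero, neg_zero, zero_mul, mul_zero]
    rw [Matrix.fromBlocks_neg, Matrix.fromBlocks_smul, Matrix.fromBlocks_add]
    simp [hC', hD', Matrix.neg_mul]
  -- block relations from the symplectic identity for S
  have hSrel : ∀ k,
      (-((C k)ᴴ * A k) + (A k)ᴴ * C k = 0) ∧ (-((C k)ᴴ * B k) + (A k)ᴴ * D k = 1) ∧
      (-((D k)ᴴ * A k) + (B k)ᴴ * C k = -1) ∧ (-((D k)ᴴ * B k) + (B k)ᴴ * D k = 0) := by
    intro k
    have h := hS k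
    rw [hblocks k, Jmat, Matrix.fromBlocks_conjTranspose, Matrix.fromBlocks_multiply,
      Matrix.fromBlocks_multiply] at h
    simp only [Matrix.zero_mul, Matrix.mul_zero, Matrix.one_mul, Matrix.mul_one,
      Matrix.neg_mul, Matrix.mul_neg, zero_add, add_zero, neg_zero] at h
    exact Matrix.fromBlocks_inj.mp h
  have hr3 : ∀ k, (B k)ᴴ * C k - (D k)ᴴ * A k = -1 := by
    intro k; rw [sub_eq_neg_add]; exact (hSrel k).2.2.1
  have hr4 : ∀ k, (B k)ᴴ * D k = (D k)ᴴ * B k := by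
    intro k
    have h := (hSrel k).2.2.2
    rw [← sub_eq_neg_add, sub_eq_zero] at h
    exact h
  -- A Bᴴ = B Aᴴ from the flipped symplectic identity
  have hAB : ∀ k, A k * (B k)ᴴ = B k * (A k)ᴴ := by
    intro k
    have h := symp_flip (hS k)
    rw [hblocks k, Jmat, Matrix.fromBlocks_conjTranspose, Matrix.fromBlocks_multiply,
      Matrix.fromBlocks_multiply] at h
    simp only [Matrix.zero_mul, Matrix.mul_zero, Matrix.one_mul, Matrix.mul_one,
      Matrix.neg_mul, Matrix.mul_neg, zero_add, add_zero, neg_zero] at h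
    have h11 := (Matrix.fromBlocks_inj.mp h).1
    -- h11 : -(B k * (A k)ᴴ) + A k * (B k)ᴴ = 0
    rw [← sub_eq_neg_add, sub_eq_zero] at h11
    exact h11
  -- relations for the blocks of the perturbed matrix
  have hr3' : ∀ k, (B k)ᴴ * C' k - (D' k)ᴴ * A k = -1 := by
    intro k
    have e : (B k)ᴴ * C' k - (D' k)ᴴ * A k = (B k)ᴴ * C k - (D k)ᴴ * A k := by
      simp only [hC', hD', Matrix.conjTranspose_add, Matrix.conjTranspose_smul,
        Matrix.conjTranspose_mul, hWH, hlstar, mul_add, add_mul, Matrix.mul_smul,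
        Matrix.smul_mul, Matrix.mul_assoc]
      abel
    rw [e]; exact hr3 k
  have hr4' : ∀ k, (B k)ᴴ * D' k = (D' k)ᴴ * B k := by
    intro k
    have e : (B k)ᴴ * D' k - (D' k)ᴴ * B k = (B k)ᴴ * D k - (D k)ᴴ * B k := by
      simp only [hC', hD', Matrix.conjTranspose_add, Matrix.conjTranspose_smul,
        Matrix.conjTranspose_mul, hWH, hlstar, mul_add, add_mul, Matrix.mul_smul,
        Matrix.smul_mul, Matrix.mul_assoc]
      abel
    have := sub_eq_zero.mpr (hr4 k)
    rw [this] at e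
    exact sub_eq_zero.mp e
  -- componentwise recursion
  have hXU : ∀ k, Xt k = A k * Xt (k+1) + B k * Ut (k+1) ∧
      Ut k = C' k * Xt (k+1) + D' k * Ut (k+1) := by
    intro k
    have h : Matrix.fromRows (Xt k) (Ut k) =
        (S k + l • Vmat S W k) * Matrix.fromRows (Xt (k+1)) (Ut (k+1)) := hsol k
    rw [hM k, Matrix.fromBlocks_mul_fromRows] at h
    exact (Matrix.fromRows_ext_iff _ _ _ _).mp h
  -- Xᴴ U hermitian
  have hherm : ∀ k, (Xt k)ᴴ * Ut k = (Ut k)ᴴ * Xt k := by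
    intro k
    have h : (Matrix.fromRows (Xt k) (Ut k))ᴴ * Jmat n * Matrix.fromRows (Xt k) (Ut k) = 0 :=
      (hrk k).2
    rw [Matrix.mul_assoc, Jmat, Matrix.fromBlocks_mul_fromRows,
      Matrix.conjTranspose_fromRows_eq_fromCols_conjTranspose,
      Matrix.fromCols_mul_fromRows] at h
    simp only [Matrix.zero_mul, Matrix.one_mul, Matrix.neg_mul, zero_add, add_zero,
      Matrix.mul_neg] at h
    rw [← sub_eq_add_neg, sub_eq_zero] at h
    exact h
  have hQ : ∀ k, ((Xt k)ᴴ)⁻¹ * (Ut k)ᴴ = Ut k * (Xt k)⁻¹ := by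
    intro k
    have h1 : (Ut k)ᴴ = (Xt k)ᴴ * (Ut k * (Xt k)⁻¹) := by
      calc (Ut k)ᴴ = (Ut k)ᴴ * (Xt k * (Xt k)⁻¹) := by rw [hinv2 k, mul_one]
        _ = ((Ut k)ᴴ * Xt k) * (Xt k)⁻¹ := by rw [Matrix.mul_assoc]
        _ = ((Xt k)ᴴ * Ut k) * (Xt k)⁻¹ := by rw [hherm k]
        _ = (Xt k)ᴴ * (Ut k * (Xt k)⁻¹) := by rw [Matrix.mul_assoc]
    rw [h1, ← Matrix.mul_assoc, hinv3 k, one_mul]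
  -- backward relation
  have hXb : ∀ k, Xt (k+1) = (D' k)ᴴ * Xt k - (B k)ᴴ * Ut k := by
    intro k
    have e1 : (D' k)ᴴ * A k - (B k)ᴴ * C' k = 1 := by
      have h := congrArg Neg.neg (hr3' k)
      rw [neg_sub, neg_neg] at h
      exact h
    have e2 : (D' k)ᴴ * B k - (B k)ᴴ * D' k = 0 := sub_eq_zero.mpr (hr4' k).symm
    rw [(hXU k).1, (hXU k).2]
    have e3 : (D' k)ᴴ * (A k * Xt (k+1) + B k * Ut (k+1)) -
        (B k)ᴴ * (C' k * Xt (k+1) + D' k * Ut (k+1)) =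
        ((D' k)ᴴ * A k - (B k)ᴴ * C' k) * Xt (k+1) +
        ((D' k)ᴴ * B k - (B k)ᴴ * D' k) * Ut (k+1) := by
      simp only [mul_add, sub_mul, Matrix.mul_assoc]
      abel
    rw [e3, e1, e2, one_mul, zero_mul, add_zero]
  -- hermiticity of the key matrices
  have hGkey : ∀ k, B k * (Xt k * (Xt (k+1))⁻¹)ᴴ = (Xt k * (Xt (k+1))⁻¹) * (B k)ᴴ := by
    intro k
    have hR : Xt k * (Xt (k+1))⁻¹ = A k + B k * (Ut (k+1) * (Xt (k+1))⁻¹) := by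
      rw [(hXU k).1, add_mul, Matrix.mul_assoc, Matrix.mul_assoc, hinv2 (k+1), mul_one]
    have hQH : (Ut (k+1) * (Xt (k+1))⁻¹)ᴴ = Ut (k+1) * (Xt (k+1))⁻¹ := by
      rw [Matrix.conjTranspose_mul, Matrix.conjTranspose_nonsing_inv, hQ (k+1)]
    rw [hR, Matrix.conjTranspose_add, Matrix.conjTranspose_mul, hQH, mul_add, add_mul, hAB k]
    simp only [Matrix.mul_assoc]
  have hGherm : ∀ k, ((Xt k)⁻¹ * B k * ((Xt (k + 1))ᴴ)⁻¹).IsHermitian := by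
    intro k
    show ((Xt k)⁻¹ * B k * ((Xt (k + 1))ᴴ)⁻¹)ᴴ = (Xt k)⁻¹ * B k * ((Xt (k + 1))ᴴ)⁻¹
    have c1 : (Xt k)⁻¹ * B k * ((Xt (k+1))ᴴ)⁻¹ =
        (Xt k)⁻¹ * (B k * (Xt k * (Xt (k+1))⁻¹)ᴴ) * ((Xt k)ᴴ)⁻¹ := by
      rw [Matrix.conjTranspose_mul, Matrix.conjTranspose_nonsing_inv]
      calc (Xt k)⁻¹ * B k * ((Xt (k+1))ᴴ)⁻¹
          = (Xt k)⁻¹ * B k * (((Xt (k+1))ᴴ)⁻¹ * ((Xt k)ᴴ * ((Xt k)ᴴ)⁻¹)) := by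
            rw [hinv4 k, mul_one]
        _ = (Xt k)⁻¹ * (B k * (((Xt (k+1))ᴴ)⁻¹ * (Xt k)ᴴ)) * ((Xt k)ᴴ)⁻¹ := by
            simp only [Matrix.mul_assoc]
    have c2 : ((Xt k)⁻¹ * B k * ((Xt (k + 1))ᴴ)⁻¹)ᴴ =
        (Xt k)⁻¹ * ((Xt k * (Xt (k+1))⁻¹) * (B k)ᴴ) * ((Xt k)ᴴ)⁻¹ := by
      have e : ((Xt k)⁻¹ * B k * ((Xt (k + 1))ᴴ)⁻¹)ᴴ =
          (Xt (k+1))⁻¹ * ((B k)ᴴ * ((Xt k)ᴴ)⁻¹) := by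
        simp [Matrix.conjTranspose_mul, Matrix.conjTranspose_nonsing_inv,
          Matrix.conjTranspose_conjTranspose, Matrix.mul_assoc]
      rw [e]
      calc (Xt (k+1))⁻¹ * ((B k)ᴴ * ((Xt k)ᴴ)⁻¹)
          = ((Xt k)⁻¹ * Xt k) * ((Xt (k+1))⁻¹ * ((B k)ᴴ * ((Xt k)ᴴ)⁻¹)) := by
            rw [hinv1 k, one_mul]
        _ = (Xt k)⁻¹ * ((Xt k * (Xt (k+1))⁻¹) * (B k)ᴴ) * ((Xt k)ᴴ)⁻¹ := by
            simp only [Matrix.mul_assoc]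
    rw [c2, c1, hGkey k]
  have hLherm : ∀ k, (LamMat B Xt k).IsHermitian := by
    intro k
    show (LamMat B Xt k)ᴴ = LamMat B Xt k
    rw [LamMat, Matrix.conjTranspose_sum]
    exact Finset.sum_congr rfl fun j _ => by rw [Matrix.conjTranspose_neg, hGherm j]
  -- the sum recursion
  have hsum : ∀ k, LamMat B Xt k =
      LamMat B Xt (k+1) + (Xt k)⁻¹ * B k * ((Xt (k + 1))ᴴ)⁻¹ := by
    intro k
    simp only [LamMat, Finset.sum_range_succ]
    abel
  -- part (ii)
  have part3 : ∀ k, Matrix.fromRows (Xhat B Xt k) (Uhat B Xt Ut k) =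
      (S k + l • Vmat S W k) *
        Matrix.fromRows (Xhat B Xt (k + 1)) (Uhat B Xt Ut (k + 1)) := by
    intro k
    rw [hM k, Matrix.fromBlocks_mul_fromRows, Matrix.fromRows_ext_iff]
    simp only [Xhat, Uhat]
    constructor
    · calc Xt k * LamMat B Xt k
          = Xt k * LamMat B Xt (k+1) + Xt k * ((Xt k)⁻¹ * B k * ((Xt (k + 1))ᴴ)⁻¹) := by
            rw [hsum k, mul_add]
        _ = (A k * Xt (k+1) + B k * Ut (k+1)) * LamMat B Xt (k+1)
              + B k * ((Xt (k + 1))ᴴ)⁻¹ := by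
            rw [← (hXU k).1]
            congr 1
            rw [← Matrix.mul_assoc, ← Matrix.mul_assoc, hinv2 k, one_mul]
        _ = A k * (Xt (k + 1) * LamMat B Xt (k + 1))
              + B k * (Ut (k + 1) * LamMat B Xt (k + 1) + ((Xt (k + 1))ᴴ)⁻¹) := by
            simp only [add_mul, mul_add, Matrix.mul_assoc]
            abel
    · have hDX : D' k * ((Xt (k+1))ᴴ)⁻¹ =
          ((Xt k)ᴴ)⁻¹ + Ut k * ((Xt k)⁻¹ * B k * ((Xt (k + 1))ᴴ)⁻¹) := by
        have hXbH : (Xt (k+1))ᴴ = (Xt k)ᴴ * D' k - (Ut k)ᴴ * B k := by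
          rw [hXb k, Matrix.conjTranspose_sub, Matrix.conjTranspose_mul,
            Matrix.conjTranspose_mul, Matrix.conjTranspose_conjTranspose,
            Matrix.conjTranspose_conjTranspose]
        have h5 : D' k = ((Xt k)ᴴ)⁻¹ * ((Xt (k+1))ᴴ + (Ut k)ᴴ * B k) := by
          rw [hXbH, sub_add_cancel, ← Matrix.mul_assoc, hinv3 k, one_mul]
        calc D' k * ((Xt (k+1))ᴴ)⁻¹
            = ((Xt k)ᴴ)⁻¹ * ((Xt (k+1))ᴴ + (Ut k)ᴴ * B k) * ((Xt (k+1))ᴴ)⁻¹ := by rw [← h5]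
          _ = ((Xt k)ᴴ)⁻¹ * ((Xt (k+1))ᴴ * ((Xt (k+1))ᴴ)⁻¹)
                + ((Xt k)ᴴ)⁻¹ * (Ut k)ᴴ * (B k * ((Xt (k+1))ᴴ)⁻¹) := by
              simp only [add_mul, mul_add, Matrix.mul_assoc]
          _ = ((Xt k)ᴴ)⁻¹ + Ut k * ((Xt k)⁻¹ * (B k * ((Xt (k+1))ᴴ)⁻¹)) := by
              rw [hinv4 (k+1), mul_one, hQ k, Matrix.mul_assoc]
          _ = ((Xt k)ᴴ)⁻¹ + Ut k * ((Xt k)⁻¹ * B k * ((Xt (k + 1))ᴴ)⁻¹) := by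
              rw [Matrix.mul_assoc]
      calc Ut k * LamMat B Xt k + ((Xt k)ᴴ)⁻¹
          = Ut k * LamMat B Xt (k+1)
              + (((Xt k)ᴴ)⁻¹ + Ut k * ((Xt k)⁻¹ * B k * ((Xt (k + 1))ᴴ)⁻¹)) := by
            rw [hsum k, mul_add]; abel
        _ = Ut k * LamMat B Xt (k+1) + D' k * ((Xt (k+1))ᴴ)⁻¹ := by rw [← hDX]
        _ = (C' k * Xt (k+1) + D' k * Ut (k+1)) * LamMat B Xt (k+1)
              + D' k * ((Xt (k+1))ᴴ)⁻¹ := by rw [← (hXU k).2]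
        _ = C' k * (Xt (k + 1) * LamMat B Xt (k + 1))
              + D' k * (Ut (k + 1) * LamMat B Xt (k + 1) + ((Xt (k + 1))ᴴ)⁻¹) := by
            simp only [add_mul, mul_add, Matrix.mul_assoc]
            abel
  -- part (iii)
  have part4 : ∀ k, (Matrix.fromRows (Xt k) (Ut k))ᴴ * Jmat n *
      Matrix.fromRows (Xhat B Xt k) (Uhat B Xt Ut k) = 1 := by
    intro k
    rw [Matrix.mul_assoc, Jmat, Matrix.fromBlocks_mul_fromRows,
      Matrix.conjTranspose_fromRows_eq_fromCols_conjTranspose,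
      Matrix.fromCols_mul_fromRows]
    simp only [Matrix.zero_mul, Matrix.one_mul, Matrix.neg_mul, zero_add, add_zero,
      Xhat, Uhat]
    have e1 : (Xt k)ᴴ * (Ut k * LamMat B Xt k) = (Ut k)ᴴ * (Xt k * LamMat B Xt k) := by
      rw [← Matrix.mul_assoc, ← Matrix.mul_assoc, hherm k]
    rw [mul_add, hinv4 k, e1, Matrix.mul_neg]
    abel
  refine ⟨hGherm, hLherm, part3, part4, ?_⟩
  intro k hLk
  have hu : IsUnit (Xhat B Xt k) := by rw [Xhat]; exact (hXinv k).mul hLk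
  refine ⟨hu, ?_, (hLherm k).inv⟩
  rw [Xhat, Matrix.mul_inv_rev, Matrix.mul_assoc, hinv1 k, mul_one]
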